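/- Let m ≥ 2 be an integer, δ = 3/(m−1), and let A_0, A_1, …, A_{2m+1} ⊆ ℝ² be the sets of the explicit construction: A_0 = A_{2m+1} = {(0,0)}; A_i = V(3−(i−1)δ, 1) ∪ H(4−(i−1)δ, 0) ∪ Q(4.5−(i−1)δ, 1.5) for i ∈ {1, …, m}; and A_i = the reflection of A_{2m+1−i} across the line x = y for i ∈ {m+1, …, 2m}. Then A_0, A_1, …, A_{2m+1} is a grid-like sequence for n = 2m+1: each A_i is closed, A_0 = {0}, A_{2m+1} = {(0,0)}, and for every i ∈ {1, …, 2m} and every a ∈ ℝ², the closed Euclidean unit disk a + B intersects A_i. -/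

import Mathlib

open Real

/-- North strip `N(a,b) = {(x,y) : −a ≤ x ≤ a, y ≥ b}`. -/
def Nset (a b : ℝ) : Set (EuclideanSpace ℝ (Fin 2)) :=
  {p | -a ≤ p 0 ∧ p 0 ≤ a ∧ b ≤ p 1}

/-- South strip `S(a,b) = {(x,y) : −a ≤ x ≤ a, y ≤ b}`. -/
def Sset (a b : ℝ) : Set (EuclideanSpace ℝ (Fin 2)) :=
  {p | -a ≤ p 0 ∧ p 0 ≤ a ∧ p 1 ≤ b}

/-- East strip `E(c,d) = {(x,y) : x ≥ c, −d ≤ y ≤ d}`. -/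
def Eset (c d : ℝ) : Set (EuclideanSpace ℝ (Fin 2)) :=
  {p | c ≤ p 0 ∧ -d ≤ p 1 ∧ p 1 ≤ d}

/-- West strip `W(c,d) = {(x,y) : x ≤ c, −d ≤ y ≤ d}`. -/
def Wset (c d : ℝ) : Set (EuclideanSpace ℝ (Fin 2)) :=
  {p | p 0 ≤ c ∧ -d ≤ p 1 ∧ p 1 ≤ d}

/-- Corner `Q^{NW}(e,f) = {(x,y) : x ≤ e, y ≥ f}`. -/
def QNWset (e f : ℝ) : Set (EuclideanSpace ℝ (Fin 2)) := {p | p 0 ≤ e ∧ f ≤ p 1}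

/-- Corner `Q^{NE}(e,f) = {(x,y) : x ≥ e, y ≥ f}`. -/
def QNEset (e f : ℝ) : Set (EuclideanSpace ℝ (Fin 2)) := {p | e ≤ p 0 ∧ f ≤ p 1}

/-- Corner `Q^{SW}(e,f) = {(x,y) : x ≤ e, y ≤ f}`. -/
def QSWset (e f : ℝ) : Set (EuclideanSpace ℝ (Fin 2)) := {p | p 0 ≤ e ∧ p 1 ≤ f}

/-- Corner `Q^{SE}(e,f) = {(x,y) : x ≥ e, y ≤ f}`. -/
def QSEset (e f : ℝ) : Set (EuclideanSpace ℝ (Fin 2)) := {p | e ≤ p 0 ∧ p 1 ≤ f}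

/-- Vertical part `V(a,b) = N(a,b) ∪ S(a,−b)`. -/
def Vset (a b : ℝ) : Set (EuclideanSpace ℝ (Fin 2)) := Nset a b ∪ Sset a (-b)

/-- Horizontal part `H(c,d) = E(c,d) ∪ W(−c,d)`. -/
def Hset (c d : ℝ) : Set (EuclideanSpace ℝ (Fin 2)) := Eset c d ∪ Wset (-c) d

/-- Union of corners
`Q(e,f) = Q^{NW}(−e,f) ∪ Q^{NE}(e,f) ∪ Q^{SW}(−e,−f) ∪ Q^{SE}(e,−f)`. -/
def Qset (e f : ℝ) : Set (EuclideanSpace ℝ (Fin 2)) :=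
  QNWset (-e) f ∪ QNEset e f ∪ QSWset (-e) (-f) ∪ QSEset e (-f)

/-- Reflection of the plane across the line `x = y`. -/
def reflXY (p : EuclideanSpace ℝ (Fin 2)) : EuclideanSpace ℝ (Fin 2) := WithLp.toLp 2 ![p 1, p 0]


section Aux

/-- Membership predicate (in coordinates) for `V(a,1) ∪ H(a+1,0) ∪ Q(a+1.5,1.5)`. -/
def MemU (a x y : ℝ) : Prop :=
  (-a ≤ x ∧ x ≤ a ∧ 1 ≤ y) ∨
  (-a ≤ x ∧ x ≤ a ∧ y ≤ -1) ∨
  (a + 1 ≤ x ∧ y = 0) ∨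
  (x ≤ -(a + 1) ∧ y = 0) ∨
  (a + 1.5 ≤ x ∧ 1.5 ≤ y) ∨
  (x ≤ -(a + 1.5) ∧ 1.5 ≤ y) ∨
  (a + 1.5 ≤ x ∧ y ≤ -1.5) ∨
  (x ≤ -(a + 1.5) ∧ y ≤ -1.5)

lemma memU_flipX {a x y : ℝ} (h : MemU a x y) : MemU a (-x) y := by
  unfold MemU at h ⊢
  rcases h with ⟨h1,h2,h3⟩|⟨h1,h2,h3⟩|⟨h1,h2⟩|⟨h1,h2⟩|⟨h1,h2⟩|⟨h1,h2⟩|⟨h1,h2⟩|⟨h1,h2⟩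
  · exact Or.inl ⟨by linarith, by linarith, h3⟩
  · exact Or.inr (Or.inl ⟨by linarith, by linarith, h3⟩)
  · exact Or.inr (Or.inr (Or.inr (Or.inl ⟨by linarith, h2⟩)))
  · exact Or.inr (Or.inr (Or.inl ⟨by linarith, h2⟩))
  · exact Or.inr (Or.inr (Or.inr (Or.inr (Or.inr (Or.inl ⟨by linarith, h2⟩)))))
  · exact Or.inr (Or.inr (Or.inr (Or.inr (Or.inl ⟨by linarith, h2⟩))))
  · exact Or.inr (Or.inr (Or.inr (Or.inr (Or.inr (Or.inr (Or.inr ⟨by linarith, h2⟩))))))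
  · exact Or.inr (Or.inr (Or.inr (Or.inr (Or.inr (Or.inr (Or.inl ⟨by linarith, h2⟩))))))

lemma memU_flipY {a x y : ℝ} (h : MemU a x y) : MemU a x (-y) := by
  unfold MemU at h ⊢
  rcases h with ⟨h1,h2,h3⟩|⟨h1,h2,h3⟩|⟨h1,h2⟩|⟨h1,h2⟩|⟨h1,h2⟩|⟨h1,h2⟩|⟨h1,h2⟩|⟨h1,h2⟩
  · exact Or.inr (Or.inl ⟨h1, h2, by linarith⟩)
  · exact Or.inl ⟨h1, h2, by linarith⟩
  · exact Or.inr (Or.inr (Or.inl ⟨h1, by simp [h2]⟩))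
  · exact Or.inr (Or.inr (Or.inr (Or.inl ⟨h1, by simp [h2]⟩)))
  · exact Or.inr (Or.inr (Or.inr (Or.inr (Or.inr (Or.inr (Or.inl ⟨h1, by linarith⟩))))))
  · exact Or.inr (Or.inr (Or.inr (Or.inr (Or.inr (Or.inr (Or.inr ⟨h1, by linarith⟩))))))
  · exact Or.inr (Or.inr (Or.inr (Or.inr (Or.inl ⟨h1, by linarith⟩))))
  · exact Or.inr (Or.inr (Or.inr (Or.inr (Or.inr (Or.inl ⟨h1, by linarith⟩)))))

lemma memU_mem (a x y : ℝ) (h : MemU a x y) :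
    (WithLp.toLp 2 ![x, y] : EuclideanSpace ℝ (Fin 2)) ∈
      Vset a 1 ∪ Hset (a + 1) 0 ∪ Qset (a + 1.5) 1.5 := by
  simp only [Vset, Hset, Qset, Nset, Sset, Eset, Wset, QNWset, QNEset, QSWset, QSEset,
    Set.mem_union, Set.mem_setOf_eq, Matrix.cons_val_zero, Matrix.cons_val_one,
    Matrix.head_cons, neg_zero]
  unfold MemU at h
  rcases h with ⟨h1,h2,h3⟩|⟨h1,h2,h3⟩|⟨h1,h2⟩|⟨h1,h2⟩|⟨h1,h2⟩|⟨h1,h2⟩|⟨h1,h2⟩|⟨h1,h2⟩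
  · exact Or.inl (Or.inl (Or.inl ⟨h1, h2, h3⟩))
  · exact Or.inl (Or.inl (Or.inr ⟨h1, h2, h3⟩))
  · exact Or.inl (Or.inr (Or.inl ⟨h1, le_of_eq h2.symm, le_of_eq h2⟩))
  · exact Or.inl (Or.inr (Or.inr ⟨h1, le_of_eq h2.symm, le_of_eq h2⟩))
  · exact Or.inr (Or.inl (Or.inl (Or.inr ⟨h1, h2⟩)))
  · exact Or.inr (Or.inl (Or.inl (Or.inl ⟨h1, h2⟩)))
  · exact Or.inr (Or.inr ⟨h1, h2⟩)
  · exact Or.inr (Or.inl (Or.inr ⟨h1, h2⟩))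

lemma key0 (a u v : ℝ) (ha : 0 ≤ a) (hu : 0 ≤ u) (hv : 0 ≤ v) :
    ∃ x y, MemU a x y ∧ (x - u) ^ 2 + (y - v) ^ 2 ≤ 1 := by
  by_cases h1 : u ≤ a
  · by_cases h2 : 1 ≤ v
    · exact ⟨u, v, Or.inl ⟨by linarith, h1, h2⟩, by nlinarith⟩
    · push_neg at h2
      exact ⟨u, 1, Or.inl ⟨by linarith, h1, le_refl 1⟩, by nlinarith⟩
  · push_neg at h1
    by_cases h2 : 1 ≤ v
    · by_cases h3 : u ≤ a + 1
      · exact ⟨a, v, Or.inl ⟨by linarith, le_refl a, h2⟩, by nlinarith⟩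
      · push_neg at h3
        by_cases h4 : a + 1.5 ≤ u
        · by_cases h5 : (1.5 : ℝ) ≤ v
          · exact ⟨u, v, Or.inr (Or.inr (Or.inr (Or.inr (Or.inl ⟨h4, h5⟩)))), by nlinarith⟩
          · push_neg at h5
            exact ⟨u, 1.5, Or.inr (Or.inr (Or.inr (Or.inr (Or.inl ⟨h4, le_refl _⟩)))),
              by nlinarith⟩
        · push_neg at h4
          by_cases h5 : (1.5 : ℝ) ≤ v
          · exact ⟨a + 1.5, v, Or.inr (Or.inr (Or.inr (Or.inr (Or.inl ⟨le_refl _, h5⟩)))),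
              by nlinarith⟩
          · push_neg at h5
            exact ⟨a + 1.5, 1.5,
              Or.inr (Or.inr (Or.inr (Or.inr (Or.inl ⟨le_refl _, le_refl _⟩)))), by nlinarith⟩
    · push_neg at h2
      by_cases h3 : a + 1 ≤ u
      · exact ⟨u, 0, Or.inr (Or.inr (Or.inl ⟨h3, rfl⟩)), by nlinarith⟩
      · push_neg at h3
        by_cases h4 : (u - a) ^ 2 + (1 - v) ^ 2 ≤ 1
        · exact ⟨a, 1, Or.inl ⟨by linarith, le_refl a, le_refl 1⟩, by nlinarith⟩
        · push_neg at h4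
          refine ⟨a + 1, 0, Or.inr (Or.inr (Or.inl ⟨le_refl _, rfl⟩)), ?_⟩
          nlinarith [mul_pos (sub_pos.2 h1) (sub_pos.2 h3), mul_nonneg hv (sub_pos.2 h2).le]

lemma norm_le_one_of (p q : EuclideanSpace ℝ (Fin 2))
    (h : (q 0 - p 0) ^ 2 + (q 1 - p 1) ^ 2 ≤ 1) : ‖q - p‖ ≤ 1 := by
  rw [EuclideanSpace.norm_eq]
  refine Real.sqrt_le_one.2 ?_
  have hs : ∀ i, (q - p) i = q i - p i := fun i => rfl
  simp only [hs, Fin.sum_univ_two, Real.norm_eq_abs, sq_abs]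
  exact h

lemma keyA (a : ℝ) (ha : 0 ≤ a) (p : EuclideanSpace ℝ (Fin 2)) :
    ∃ q ∈ Vset a 1 ∪ Hset (a + 1) 0 ∪ Qset (a + 1.5) 1.5, ‖q - p‖ ≤ 1 := by
  obtain ⟨x, y, hmem, hd⟩ := key0 a |p 0| |p 1| ha (abs_nonneg _) (abs_nonneg _)
  set x' : ℝ := if 0 ≤ p 0 then x else -x with hx'
  set y' : ℝ := if 0 ≤ p 1 then y else -y with hy'
  have hmem' : MemU a x' y' := by
    rw [hx', hy']
    split_ifs
    · exact hmem
    · exact memU_flipY hmem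
    · exact memU_flipX hmem
    · exact memU_flipY (memU_flipX hmem)
  refine ⟨WithLp.toLp 2 ![x', y'], memU_mem _ _ _ hmem', norm_le_one_of _ _ ?_⟩
  have e0 : (WithLp.toLp 2 ![x', y'] : EuclideanSpace ℝ (Fin 2)) 0 = x' := rfl
  have e1 : (WithLp.toLp 2 ![x', y'] : EuclideanSpace ℝ (Fin 2)) 1 = y' := rfl
  rw [e0, e1]
  have hx2 : (x' - p 0) ^ 2 = (x - |p 0|) ^ 2 := by
    rw [hx']
    rcases le_or_gt 0 (p 0) with h | h
    · rw [if_pos h, abs_of_nonneg h]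
    · rw [if_neg (not_le.2 h), abs_of_neg h]; ring
  have hy2 : (y' - p 1) ^ 2 = (y - |p 1|) ^ 2 := by
    rw [hy']
    rcases le_or_gt 0 (p 1) with h | h
    · rw [if_pos h, abs_of_nonneg h]
    · rw [if_neg (not_le.2 h), abs_of_neg h]; ring
  rw [hx2, hy2]; exact hd

lemma reflXY_invol (p : EuclideanSpace ℝ (Fin 2)) : reflXY (reflXY p) = p := by
  ext i; fin_cases i <;> simp [reflXY]

lemma reflXY_cont : Continuous reflXY := by
  unfold reflXY
  refine (PiLp.continuous_toLp 2 _).comp (continuous_pi ?_)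
  intro i; fin_cases i <;> simp <;> exact (continuous_apply _).comp (PiLp.continuous_ofLp 2 _)

lemma reflXY_dist (p q : EuclideanSpace ℝ (Fin 2)) :
    dist (reflXY p) (reflXY q) = dist p q := by
  simp [reflXY, EuclideanSpace.dist_eq, Fin.sum_univ_two]
  ring_nf

lemma isClosed_basic :
    (∀ a b : ℝ, IsClosed (Nset a b)) ∧ (∀ a b : ℝ, IsClosed (Sset a b)) ∧
    (∀ c d : ℝ, IsClosed (Eset c d)) ∧ (∀ c d : ℝ, IsClosed (Wset c d)) ∧
    (∀ e f : ℝ, IsClosed (QNWset e f)) ∧ (∀ e f : ℝ, IsClosed (QNEset e f)) ∧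
    (∀ e f : ℝ, IsClosed (QSWset e f)) ∧ (∀ e f : ℝ, IsClosed (QSEset e f)) := by
  have h0 : Continuous fun p : EuclideanSpace ℝ (Fin 2) => p 0 := (continuous_apply 0).comp (PiLp.continuous_ofLp 2 _)
  have h1 : Continuous fun p : EuclideanSpace ℝ (Fin 2) => p 1 := (continuous_apply 1).comp (PiLp.continuous_ofLp 2 _)
  refine ⟨fun a b => ?_, fun a b => ?_, fun c d => ?_, fun c d => ?_,
    fun e f => ?_, fun e f => ?_, fun e f => ?_, fun e f => ?_⟩
  · exact (isClosed_le continuous_const h0).inter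
      ((isClosed_le h0 continuous_const).inter (isClosed_le continuous_const h1))
  · exact (isClosed_le continuous_const h0).inter
      ((isClosed_le h0 continuous_const).inter (isClosed_le h1 continuous_const))
  · exact (isClosed_le continuous_const h0).inter
      ((isClosed_le continuous_const h1).inter (isClosed_le h1 continuous_const))
  · exact (isClosed_le h0 continuous_const).inter
      ((isClosed_le continuous_const h1).inter (isClosed_le h1 continuous_const))
  · exact (isClosed_le h0 continuous_const).inter (isClosed_le continuous_const h1)
  · exact (isClosed_le continuous_const h0).inter (isClosed_le continuous_const h1)
  · exact (isClosed_le h0 continuous_const).inter (isClosed_le h1 continuous_const)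
  · exact (isClosed_le continuous_const h0).inter (isClosed_le h1 continuous_const)

lemma isClosed_union3 (a c e f : ℝ) :
    IsClosed (Vset a 1 ∪ Hset c 0 ∪ Qset e f) := by
  obtain ⟨hN, hS, hE, hW, hQNW, hQNE, hQSW, hQSE⟩ := isClosed_basic
  exact (((hN _ _).union (hS _ _)).union ((hE _ _).union (hW _ _))).union
    ((((hQNW _ _).union (hQNE _ _)).union (hQSW _ _)).union (hQSE _ _))

end Aux

/-- The explicit construction `A 0, …, A (2m+1)` of Theorem 3 is a grid-like
sequence for `n = 2m+1`: each `A i` is closed, `A 0 = A (2m+1) = {0}`, and for every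
`i ∈ {1,…,2m}` every translate of the closed Euclidean unit disk meets `A i`. -/
theorem construction_is_gridlike (m : ℕ) (hm : 2 ≤ m) (δ : ℝ)
    (hδ : δ = 3 / ((m : ℝ) - 1))
    (A : ℕ → Set (EuclideanSpace ℝ (Fin 2)))
    (hA0 : A 0 = {0}) (hAlast : A (2 * m + 1) = {0})
    (hAfirst : ∀ i, 1 ≤ i → i ≤ m →
      A i = Vset (3 - ((i : ℝ) - 1) * δ) 1 ∪ Hset (4 - ((i : ℝ) - 1) * δ) 0 ∪
        Qset (4.5 - ((i : ℝ) - 1) * δ) 1.5)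
    (hAsecond : ∀ i, m + 1 ≤ i → i ≤ 2 * m → A i = reflXY '' A (2 * m + 1 - i)) :
    (∀ i, i ≤ 2 * m + 1 → IsClosed (A i)) ∧
    A 0 = {0} ∧ A (2 * m + 1) = {0} ∧
    (∀ i, 1 ≤ i → i ≤ 2 * m → ∀ p : EuclideanSpace ℝ (Fin 2),
      ∃ q ∈ A i, ‖q - p‖ ≤ 1) := by
  have hδpos : 0 ≤ δ := by
    rw [hδ]
    have : (2:ℝ) ≤ (m:ℝ) := by exact_mod_cast hm
    apply div_nonneg <;> linarith
  have hkey : ∀ i : ℕ, 1 ≤ i → i ≤ m →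
      (0 ≤ 3 - ((i:ℝ) - 1) * δ) ∧
      A i = Vset (3 - ((i:ℝ) - 1) * δ) 1 ∪ Hset ((3 - ((i:ℝ) - 1) * δ) + 1) 0 ∪
        Qset ((3 - ((i:ℝ) - 1) * δ) + 1.5) 1.5 := by
    intro i h1 h2
    have hi : ((i:ℝ) - 1) ≤ (m:ℝ) - 1 := by
      have : (i:ℝ) ≤ (m:ℝ) := by exact_mod_cast h2
      linarith
    have hm1 : (1:ℝ) ≤ (m:ℝ) - 1 := by
      have : (2:ℝ) ≤ (m:ℝ) := by exact_mod_cast hm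
      linarith
    have hle : ((i:ℝ) - 1) * δ ≤ 3 := by
      rw [hδ]
      calc ((i:ℝ) - 1) * (3 / ((m:ℝ) - 1)) ≤ ((m:ℝ) - 1) * (3 / ((m:ℝ) - 1)) :=
            mul_le_mul_of_nonneg_right hi (by positivity)
        _ = 3 := by field_simp
    refine ⟨by linarith, ?_⟩
    rw [hAfirst i h1 h2]
    have e1 : (3 - ((i:ℝ) - 1) * δ) + 1 = 4 - ((i:ℝ) - 1) * δ := by ring
    have e2 : (3 - ((i:ℝ) - 1) * δ) + 1.5 = 4.5 - ((i:ℝ) - 1) * δ := by norm_num; ring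
    rw [e1, e2]
  have himg : ∀ S : Set (EuclideanSpace ℝ (Fin 2)), reflXY '' S = reflXY ⁻¹' S := by
    intro S
    ext q
    constructor
    · rintro ⟨r, hr, rfl⟩
      simpa [Set.mem_preimage, reflXY_invol] using hr
    · intro h
      exact ⟨reflXY q, h, reflXY_invol q⟩
  refine ⟨?_, hA0, hAlast, ?_⟩
  · intro i hi
    rcases Nat.eq_zero_or_pos i with rfl | hpos
    · rw [hA0]; exact isClosed_singleton
    by_cases hlast : i = 2 * m + 1
    · rw [hlast, hAlast]; exact isClosed_singleton
    by_cases hfirst : i ≤ m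
    · rw [(hkey i hpos hfirst).2]; exact isClosed_union3 _ _ _ _
    · have h1' : m + 1 ≤ i := by omega
      have h2' : i ≤ 2 * m := by omega
      rw [hAsecond i h1' h2', himg]
      have hj1 : 1 ≤ 2 * m + 1 - i := by omega
      have hj2 : 2 * m + 1 - i ≤ m := by omega
      rw [(hkey _ hj1 hj2).2]
      exact (isClosed_union3 _ _ _ _).preimage reflXY_cont
  · intro i h1 h2 p
    by_cases hfirst : i ≤ m
    · obtain ⟨ha, hAi⟩ := hkey i h1 hfirst
      rw [hAi]
      exact keyA _ ha p
    · have h1' : m + 1 ≤ i := by omega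
      have hj1 : 1 ≤ 2 * m + 1 - i := by omega
      have hj2 : 2 * m + 1 - i ≤ m := by omega
      obtain ⟨ha, hAj⟩ := hkey _ hj1 hj2
      have hx : ∃ q ∈ A (2 * m + 1 - i), ‖q - reflXY p‖ ≤ 1 := by
        rw [hAj]; exact keyA _ ha (reflXY p)
      obtain ⟨q, hq, hqd⟩ := hx
      refine ⟨reflXY q, ?_, ?_⟩
      · rw [hAsecond i h1' h2]
        exact ⟨q, hq, rfl⟩
      · calc ‖reflXY q - p‖ = dist (reflXY q) p := (dist_eq_norm _ _).symm
          _ = dist (reflXY q) (reflXY (reflXY p)) := by rw [reflXY_invol]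
          _ = dist q (reflXY p) := reflXY_dist _ _
          _ = ‖q - reflXY p‖ := dist_eq_norm _ _
          _ ≤ 1 := hqd
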